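/- Let p be an odd prime, a a quadratic non-residue mod p, and f(x) = x_1² − a x_2² − p x_3² + a p x_4². Then for Re(α) > 2, Z(α) := ∫_{Z_p⁴∖{0}} |f(x)|_p^{α−2} d⁴x converges and equals (1 − p^{−2})/(1 − p^{−α}). -/

import Mathlib

open MeasureTheory Complex Classical Filter

variable (p : ℕ) [Fact p.Prime]

noncomputable instance : MeasurableSpace ℚ_[p] := borel _
instance : BorelSpace ℚ_[p] := ⟨rfl⟩
noncomputable instance (n : ℕ) : MeasurableSpace (Fin n → ℚ_[p]) := borel _
instance (n : ℕ) : BorelSpace (Fin n → ℚ_[p]) := ⟨rfl⟩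

/-- Haar measure on `ℚ_p` normalized so that `ℤ_p` (the closed unit ball) has measure 1. -/
noncomputable def haarQ : Measure ℚ_[p] :=
  Measure.addHaarMeasure ⟨⟨Metric.closedBall 0 1, isCompact_closedBall 0 1⟩,
    ⟨0, mem_interior_iff_mem_nhds.2 (Metric.closedBall_mem_nhds 0 one_pos)⟩⟩

/-- Haar measure on `ℚ_p^n` normalized so that `ℤ_p^n` has measure 1. -/
noncomputable def haarQn (n : ℕ) : Measure (Fin n → ℚ_[p]) :=
  Measure.addHaarMeasure ⟨⟨Metric.closedBall 0 1, isCompact_closedBall 0 1⟩,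
    ⟨0, mem_interior_iff_mem_nhds.2 (Metric.closedBall_mem_nhds 0 one_pos)⟩⟩

/-- The p-adic fractional part of `x` : the unique rational of the form `z / p^n`
lying in `[0,1)` with `x - r ∈ ℤ_p`. -/
noncomputable def padicFract (x : ℚ_[p]) : ℚ :=
  if h : ∃ r : ℚ, (∃ (z : ℤ) (n : ℕ), r = (z : ℚ) / (p : ℚ) ^ n) ∧ 0 ≤ r ∧ r < 1 ∧
      ‖x - (r : ℚ_[p])‖ ≤ 1 then h.choose else 0

/-- The standard additive character `χ(y) = exp(2 π i {y}_p)` of `ℚ_p`. -/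
noncomputable def stdChar (y : ℚ_[p]) : ℂ :=
  Complex.exp (2 * Real.pi * Complex.I * (padicFract p y : ℂ))

/-- A Bruhat–Schwartz (test) function: locally constant with compact support. -/
def IsBruhatSchwartz {E : Type*} [TopologicalSpace E] (φ : E → ℂ) : Prop :=
  IsLocallyConstant φ ∧ HasCompactSupport φ

/-- Fourier transform on `ℚ_p`. -/
noncomputable def fourier1 (φ : ℚ_[p] → ℂ) (ξ : ℚ_[p]) : ℂ :=
  ∫ x, stdChar p (-(ξ * x)) * φ x ∂haarQ p

/-- Fourier transform on `ℚ_p^n`. -/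
noncomputable def fourierN (n : ℕ) (φ : (Fin n → ℚ_[p]) → ℂ) (ξ : Fin n → ℚ_[p]) : ℂ :=
  ∫ x, stdChar p (-(∑ i, ξ i * x i)) * φ x ∂haarQn p n

/-- Inverse Fourier transform on `ℚ_p^n`. -/
noncomputable def fourierInvN (n : ℕ) (φ : (Fin n → ℚ_[p]) → ℂ) (x : Fin n → ℚ_[p]) : ℂ :=
  ∫ ξ, stdChar p (∑ i, x i * ξ i) * φ ξ ∂haarQn p n

/-- The elliptic quadratic form `f(x) = x₁² - a x₂² - p x₃² + a p x₄²`. -/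
noncomputable def Qf (a : ℤ) (x : Fin 4 → ℚ_[p]) : ℚ_[p] :=
  x 0 ^ 2 - (a : ℚ_[p]) * x 1 ^ 2 - (p : ℚ_[p]) * x 2 ^ 2 + (a : ℚ_[p]) * (p : ℚ_[p]) * x 3 ^ 2

/-- The dual elliptic quadratic form `f°(x) = a p x₁² - p x₂² - a x₃² + x₄²`. -/
noncomputable def QfCirc (a : ℤ) (x : Fin 4 → ℚ_[p]) : ℚ_[p] :=
  (a : ℚ_[p]) * (p : ℚ_[p]) * x 0 ^ 2 - (p : ℚ_[p]) * x 1 ^ 2 - (a : ℚ_[p]) * x 2 ^ 2 + x 3 ^ 2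

section ZpAuxProof

open Metric
open scoped ENNReal NNReal
set_option linter.unusedSectionVars false
set_option linter.unusedVariables false

variable {p}

lemma pReal_one_lt : (1:ℝ) < (p:ℝ) := by exact_mod_cast (Fact.out : p.Prime).one_lt

lemma pReal_pos : (0:ℝ) < (p:ℝ) := lt_trans one_pos pReal_one_lt

lemma padic_sub_le_max (u v : ℚ_[p]) : ‖u - v‖ ≤ max ‖u‖ ‖v‖ := by
  rw [sub_eq_add_neg]
  simpa using Padic.nonarchimedean u (-v)

lemma padic_discrete {u : ℚ_[p]} {n : ℤ} : ‖u‖ ≤ (p:ℝ) ^ n ↔ ‖u‖ < (p:ℝ) ^ (n+1) :=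
  Padic.norm_le_pow_iff_norm_lt_pow_add_one u n

lemma norm_a_eq_one {a : ℤ} (ha : legendreSym p a = -1) : ‖(a : ℚ_[p])‖ = 1 := by
  have hnsq : ¬ IsSquare ((a : ZMod p)) := (legendreSym.eq_neg_one_iff p).mp ha
  have ha0 : ((a : ZMod p)) ≠ 0 := by
    intro h0
    exact hnsq (h0 ▸ ⟨0, by simp⟩)
  have hpa : ¬ ((p:ℤ) ∣ a) := fun hdvd =>
    ha0 ((ZMod.intCast_zmod_eq_zero_iff_dvd a p).mpr hdvd)
  refine le_antisymm (Padic.norm_int_le_one a) (not_lt.mp fun hlt => hpa ?_)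
  exact (Padic.norm_intCast_lt_one_iff (k := a)).mp hlt

lemma unit_norm {a : ℤ} (ha : legendreSym p a = -1) {u v : ℚ_[p]} (hu : ‖u‖ ≤ 1)
    (hv : ‖v‖ ≤ 1) (h : ¬ (‖u‖ < 1 ∧ ‖v‖ < 1)) :
    ‖u ^ 2 - (a : ℚ_[p]) * v ^ 2‖ = 1 := by
  have hnsq : ¬ IsSquare ((a : ZMod p)) := (legendreSym.eq_neg_one_iff p).mp ha
  have haN : ‖(a : ℚ_[p])‖ = 1 := norm_a_eq_one ha
  have hle : ‖u ^ 2 - (a : ℚ_[p]) * v ^ 2‖ ≤ 1 := by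
    refine le_trans (padic_sub_le_max _ _) (max_le ?_ ?_)
    · rw [norm_pow]; exact pow_le_one₀ (norm_nonneg _) hu
    · rw [norm_mul, haN, one_mul, norm_pow]
      exact pow_le_one₀ (norm_nonneg _) hv
  rcases eq_or_lt_of_le hle with heq | hlt
  · exact heq
  exfalso
  rcases lt_or_eq_of_le hv with hv1 | hv1
  · -- ‖v‖ < 1, so ‖u‖ = 1
    have hu1 : ‖u‖ = 1 := by
      rcases lt_or_eq_of_le hu with h' | h'
      · exact absurd ⟨h', hv1⟩ h
      · exact h'
    have h2 : ‖u ^ 2‖ < 1 := by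
      have : u ^ 2 = (u ^ 2 - (a:ℚ_[p]) * v ^ 2) + (a:ℚ_[p]) * v ^ 2 := by ring
      rw [this]
      refine lt_of_le_of_lt (Padic.nonarchimedean _ _) (max_lt hlt ?_)
      rw [norm_mul, haN, one_mul, norm_pow]
      exact pow_lt_one₀ (norm_nonneg _) hv1 two_ne_zero
    rw [norm_pow, hu1, one_pow] at h2
    exact absurd h2 (lt_irrefl _)
  · -- ‖v‖ = 1
    have hvne : v ≠ 0 := by
      intro h0; rw [h0, norm_zero] at hv1; exact one_ne_zero hv1.symm
    set w : ℚ_[p] := u / v with hw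
    have hwle : ‖w‖ ≤ 1 := by
      rw [hw, norm_div, hv1, div_one]; exact hu
    have hkey : ‖w ^ 2 - (a : ℚ_[p])‖ < 1 := by
      have : w ^ 2 - (a : ℚ_[p]) = (u ^ 2 - (a:ℚ_[p]) * v ^ 2) / v ^ 2 := by
        rw [hw]
        field_simp
      rw [this, norm_div, norm_pow, hv1, one_pow, div_one]
      exact hlt
    -- lift to ℤ_[p]
    set W : ℤ_[p] := ⟨w, hwle⟩ with hW
    have hsub : ((W ^ 2 - (a : ℤ_[p]) : ℤ_[p]) : ℚ_[p]) = w ^ 2 - (a : ℚ_[p]) := by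
      push_cast [hW]
      rfl
    have hnorm : ‖(W ^ 2 - (a : ℤ_[p]) : ℤ_[p])‖ < 1 := by
      rw [← PadicInt.padic_norm_e_of_padicInt, hsub]
      exact hkey
    have hmem : (W ^ 2 - (a : ℤ_[p])) ∈ IsLocalRing.maximalIdeal ℤ_[p] := by
      rw [IsLocalRing.mem_maximalIdeal, PadicInt.mem_nonunits]
      exact hnorm
    have hker : PadicInt.toZMod (W ^ 2 - (a : ℤ_[p])) = 0 := by
      rw [← RingHom.mem_ker, PadicInt.ker_toZMod]
      exact hmem
    have : (PadicInt.toZMod W) ^ 2 = ((a : ZMod p)) := by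
      have := sub_eq_zero.mp (by simpa [map_sub, map_pow, map_intCast] using hker)
      simpa [map_pow, map_intCast] using this
    exact hnsq ⟨PadicInt.toZMod W, by rw [← this]; ring⟩

set_option linter.unusedSectionVars false

lemma forall_fin4 {P : Fin 4 → Prop} (h0 : P 0) (h1 : P 1) (h2 : P 2) (h3 : P 3) :
    ∀ i, P i := by
  intro i
  fin_cases i
  · exact h0
  · exact h1
  · exact h2
  · exact h3

lemma ppow_le {m n : ℤ} (h : m ≤ n) : (p:ℝ)^m ≤ (p:ℝ)^n :=
  zpow_le_zpow_right₀ (le_of_lt pReal_one_lt) h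

lemma ppow_lt {m n : ℤ} (h : m < n) : (p:ℝ)^m < (p:ℝ)^n :=
  zpow_lt_zpow_right₀ pReal_one_lt h

lemma ppow_pos (m : ℤ) : (0:ℝ) < (p:ℝ)^m := zpow_pos (lt_trans one_pos pReal_one_lt) m

lemma norm_p_pow_padic (k : ℕ) : ‖((p:ℚ_[p]))^k‖ = (p:ℝ)^(-(k:ℤ)) := by
  rw [norm_pow, Padic.norm_p, zpow_neg, zpow_natCast, inv_pow]

lemma pQp_ne_zero : ((p:ℚ_[p])) ≠ 0 :=
  Nat.cast_ne_zero.mpr (Fact.out : p.Prime).ne_zero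

lemma pair_norm {a : ℤ} (ha : legendreSym p a = -1) (k : ℕ) {u v : ℚ_[p]}
    (hu : ‖u‖ ≤ (p:ℝ) ^ (-(k:ℤ))) (hv : ‖v‖ ≤ (p:ℝ) ^ (-(k:ℤ)))
    (h : ¬ (‖u‖ ≤ (p:ℝ) ^ (-((k:ℤ)+1)) ∧ ‖v‖ ≤ (p:ℝ) ^ (-((k:ℤ)+1)))) :
    ‖u ^ 2 - (a : ℚ_[p]) * v ^ 2‖ = (p:ℝ) ^ (-(2*(k:ℤ))) := by
  set π : ℚ_[p] := (p:ℚ_[p])^k with hπdef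
  have hπ : ‖π‖ = (p:ℝ)^(-(k:ℤ)) := norm_p_pow_padic k
  have hπpos : (0:ℝ) < ‖π‖ := by rw [hπ]; exact ppow_pos _
  have hπ0 : π ≠ 0 := pow_ne_zero _ pQp_ne_zero
  have hdiv : ∀ t : ℚ_[p], ‖t / π‖ = ‖t‖ / (p:ℝ)^(-(k:ℤ)) := by
    intro t; rw [norm_div, hπ]
  have hle1 : ∀ t : ℚ_[p], ‖t‖ ≤ (p:ℝ)^(-(k:ℤ)) → ‖t / π‖ ≤ 1 := by
    intro t ht; rw [hdiv]; exact div_le_one_of_le₀ ht (le_of_lt (ppow_pos _))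
  have hlt1 : ∀ t : ℚ_[p], ‖t / π‖ < 1 ↔ ‖t‖ ≤ (p:ℝ)^(-((k:ℤ)+1)) := by
    intro t
    rw [hdiv, div_lt_one (ppow_pos _)]
    rw [show -(k:ℤ) = (-((k:ℤ)+1)) + 1 by ring]
    exact (Padic.norm_le_pow_iff_norm_lt_pow_add_one t _).symm
  have hmain : ‖(u/π) ^ 2 - (a : ℚ_[p]) * (v/π) ^ 2‖ = 1 := by
    refine unit_norm ha (hle1 u hu) (hle1 v hv) ?_
    intro ⟨h1, h2⟩
    exact h ⟨(hlt1 u).mp h1, (hlt1 v).mp h2⟩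
  have hfact : (u/π) ^ 2 - (a : ℚ_[p]) * (v/π) ^ 2 = (u ^ 2 - (a:ℚ_[p]) * v ^ 2) / π^2 := by
    field_simp
  rw [hfact, norm_div, norm_pow, hπ, div_eq_one_iff_eq (ne_of_gt (pow_pos (ppow_pos _) 2))] at hmain
  rw [hmain, ← zpow_natCast ((p:ℝ)^(-(k:ℤ))) 2, ← zpow_mul]
  ring_nf

/-- The set `{x : ∀ i, ‖x i‖ ≤ p^{-m i}}`. -/
def ball4 (p : ℕ) [Fact p.Prime] (m : Fin 4 → ℕ) : Set (Fin 4 → ℚ_[p]) :=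
  {x | ∀ i, ‖x i‖ ≤ (p:ℝ) ^ (-(m i : ℤ))}

/-- Exponents for the intermediate set. -/
def mW (k : ℕ) : Fin 4 → ℕ := fun i => if (i:ℕ) < 2 then k+1 else k

def Vset (p : ℕ) [Fact p.Prime] (k : ℕ) : Set (Fin 4 → ℚ_[p]) :=
  ball4 p (fun _ => k) \ ball4 p (mW k)

def Wset (p : ℕ) [Fact p.Prime] (k : ℕ) : Set (Fin 4 → ℚ_[p]) :=
  ball4 p (mW k) \ ball4 p (fun _ => k+1)


lemma norm_Qf_V {a : ℤ} (ha : legendreSym p a = -1) {k : ℕ} {x : Fin 4 → ℚ_[p]}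
    (hx : x ∈ Vset p k) : ‖Qf p a x‖ = (p:ℝ) ^ (-(2*(k:ℤ))) := by
  obtain ⟨hin, hout⟩ := hx
  have hb : ∀ i, ‖x i‖ ≤ (p:ℝ)^(-(k:ℤ)) := hin
  have h01 : ¬ (‖x 0‖ ≤ (p:ℝ) ^ (-((k:ℤ)+1)) ∧ ‖x 1‖ ≤ (p:ℝ) ^ (-((k:ℤ)+1))) := by
    intro ⟨h0, h1⟩
    refine hout (forall_fin4 ?_ ?_ ?_ ?_)
    · show ‖x 0‖ ≤ (p:ℝ)^(-((k+1:ℕ):ℤ)); push_cast; exact h0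
    · show ‖x 1‖ ≤ (p:ℝ)^(-((k+1:ℕ):ℤ)); push_cast; exact h1
    · exact hb 2
    · exact hb 3
  have hg : ‖x 0 ^ 2 - (a:ℚ_[p]) * x 1 ^ 2‖ = (p:ℝ)^(-(2*(k:ℤ))) :=
    pair_norm ha k (hb 0) (hb 1) h01
  have hsq : ∀ i, ‖x i ^ 2‖ ≤ (p:ℝ)^(-(2*(k:ℤ))) := by
    intro i
    rw [norm_pow]
    calc ‖x i‖^2 ≤ ((p:ℝ)^(-(k:ℤ)))^2 := by
          exact pow_le_pow_left₀ (norm_nonneg _) (hb i) 2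
      _ = (p:ℝ)^(-(2*(k:ℤ))) := by
          rw [← zpow_natCast ((p:ℝ)^(-(k:ℤ))) 2, ← zpow_mul]; ring_nf
  have hh : ‖(p:ℚ_[p]) * ((a:ℚ_[p]) * x 3 ^ 2 - x 2 ^ 2)‖ < (p:ℝ)^(-(2*(k:ℤ))) := by
    rw [norm_mul, Padic.norm_p]
    calc (p:ℝ)⁻¹ * ‖(a:ℚ_[p]) * x 3 ^ 2 - x 2 ^ 2‖
        ≤ (p:ℝ)⁻¹ * (p:ℝ)^(-(2*(k:ℤ))) := by
          refine mul_le_mul_of_nonneg_left ?_ (by positivity)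
          refine le_trans (padic_sub_le_max _ _) (max_le ?_ (hsq 2))
          rw [norm_mul, norm_a_eq_one ha, one_mul]
          exact hsq 3
      _ < (p:ℝ)^(-(2*(k:ℤ))) := by
          rw [show (p:ℝ)⁻¹ = (p:ℝ)^(-1:ℤ) by simp, ← zpow_add₀ (ne_of_gt (lt_trans one_pos pReal_one_lt))]
          exact ppow_lt (by omega)
  have hrw : Qf p a x = (x 0 ^ 2 - (a:ℚ_[p]) * x 1 ^ 2) + (p:ℚ_[p]) * ((a:ℚ_[p]) * x 3 ^ 2 - x 2 ^ 2) := by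
    unfold Qf; ring
  rw [hrw, Padic.add_eq_max_of_ne (by rw [hg]; exact ne_of_gt hh), hg,
    max_eq_left (le_of_lt hh)]

lemma norm_Qf_W {a : ℤ} (ha : legendreSym p a = -1) {k : ℕ} {x : Fin 4 → ℚ_[p]}
    (hx : x ∈ Wset p k) : ‖Qf p a x‖ = (p:ℝ) ^ (-(2*(k:ℤ)+1)) := by
  obtain ⟨hin, hout⟩ := hx
  have hb01 : ‖x 0‖ ≤ (p:ℝ)^(-((k:ℤ)+1)) ∧ ‖x 1‖ ≤ (p:ℝ)^(-((k:ℤ)+1)) := by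
    have h0 := hin 0
    have h1 := hin 1
    rw [show mW k 0 = k + 1 from rfl] at h0
    rw [show mW k 1 = k + 1 from rfl] at h1
    push_cast at h0 h1
    exact ⟨h0, h1⟩
  have hb23 : ‖x 2‖ ≤ (p:ℝ)^(-(k:ℤ)) ∧ ‖x 3‖ ≤ (p:ℝ)^(-(k:ℤ)) := by
    have h2 := hin 2
    have h3 := hin 3
    rw [show mW k 2 = k from rfl] at h2
    rw [show mW k 3 = k from rfl] at h3
    exact ⟨h2, h3⟩
  have h23 : ¬ (‖x 2‖ ≤ (p:ℝ) ^ (-((k:ℤ)+1)) ∧ ‖x 3‖ ≤ (p:ℝ) ^ (-((k:ℤ)+1))) := by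
    intro ⟨h2, h3⟩
    refine hout (forall_fin4 ?_ ?_ ?_ ?_)
    · show ‖x 0‖ ≤ (p:ℝ)^(-((k+1:ℕ):ℤ)); push_cast; exact hb01.1
    · show ‖x 1‖ ≤ (p:ℝ)^(-((k+1:ℕ):ℤ)); push_cast; exact hb01.2
    · show ‖x 2‖ ≤ (p:ℝ)^(-((k+1:ℕ):ℤ)); push_cast; exact h2
    · show ‖x 3‖ ≤ (p:ℝ)^(-((k+1:ℕ):ℤ)); push_cast; exact h3
  have hg : ‖x 2 ^ 2 - (a:ℚ_[p]) * x 3 ^ 2‖ = (p:ℝ)^(-(2*(k:ℤ))) :=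
    pair_norm ha k hb23.1 hb23.2 h23
  have hmain : ‖(p:ℚ_[p]) * ((a:ℚ_[p]) * x 3 ^ 2 - x 2 ^ 2)‖ = (p:ℝ)^(-(2*(k:ℤ)+1)) := by
    rw [norm_mul, Padic.norm_p, show (a:ℚ_[p]) * x 3 ^ 2 - x 2 ^ 2 = -(x 2 ^ 2 - (a:ℚ_[p]) * x 3 ^ 2) by ring, norm_neg, hg,
      show (p:ℝ)⁻¹ = (p:ℝ)^(-1:ℤ) by simp, ← zpow_add₀ (ne_of_gt (lt_trans one_pos pReal_one_lt))]
    ring_nf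
  have hsq : ∀ i, ‖x i‖ ≤ (p:ℝ)^(-((k:ℤ)+1)) → ‖x i ^ 2‖ ≤ (p:ℝ)^(-(2*(k:ℤ)+2)) := by
    intro i hi
    rw [norm_pow]
    calc ‖x i‖^2 ≤ ((p:ℝ)^(-((k:ℤ)+1)))^2 := pow_le_pow_left₀ (norm_nonneg _) hi 2
      _ = (p:ℝ)^(-(2*(k:ℤ)+2)) := by
          rw [← zpow_natCast ((p:ℝ)^(-((k:ℤ)+1))) 2, ← zpow_mul]; ring_nf
  have hsm : ‖x 0 ^ 2 - (a:ℚ_[p]) * x 1 ^ 2‖ < (p:ℝ)^(-(2*(k:ℤ)+1)) := by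
    refine lt_of_le_of_lt (le_trans (padic_sub_le_max _ _) (max_le (hsq 0 hb01.1) ?_)) ?_
    · rw [norm_mul, norm_a_eq_one ha, one_mul]; exact hsq 1 hb01.2
    · exact ppow_lt (by omega)
  have hrw : Qf p a x = (p:ℚ_[p]) * ((a:ℚ_[p]) * x 3 ^ 2 - x 2 ^ 2) + (x 0 ^ 2 - (a:ℚ_[p]) * x 1 ^ 2) := by
    unfold Qf; ring
  rw [hrw, Padic.add_eq_max_of_ne (by rw [hmain]; exact (ne_of_lt hsm).symm), hmain,
    max_eq_left (le_of_lt hsm)]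

lemma mW_ge (k : ℕ) (i : Fin 4) : k ≤ mW k i ∧ mW k i ≤ k + 1 := by
  unfold mW; split <;> omega

lemma ball4_anti {m m' : Fin 4 → ℕ} (h : ∀ i, m i ≤ m' i) : ball4 p m' ⊆ ball4 p m :=
  fun x hx i => le_trans (hx i) (ppow_le (by have := h i; omega))

lemma zero_mem_ball4 (m : Fin 4 → ℕ) : (0 : Fin 4 → ℚ_[p]) ∈ ball4 p m := by
  intro i
  simp only [Pi.zero_apply, norm_zero]
  exact le_of_lt (zpow_pos (lt_trans one_pos pReal_one_lt) _)

lemma mem_D_iff {x : Fin 4 → ℚ_[p]} :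
    x ∈ closedBall (0 : Fin 4 → ℚ_[p]) 1 \ {0} ↔ (∀ i, ‖x i‖ ≤ 1) ∧ x ≠ 0 := by
  rw [Set.mem_diff, Metric.mem_closedBall, dist_pi_le_iff zero_le_one]
  simp [dist_eq_norm]

lemma Vset_subset_D (k : ℕ) : Vset p k ⊆ closedBall (0 : Fin 4 → ℚ_[p]) 1 \ {0} := by
  intro x ⟨h1, h2⟩
  rw [mem_D_iff]
  refine ⟨fun i => le_trans (h1 i) (by simpa using ppow_le (p := p) (by omega : -(k:ℤ) ≤ 0)), ?_⟩
  rintro rfl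
  exact h2 (zero_mem_ball4 _)

lemma Wset_subset_D (k : ℕ) : Wset p k ⊆ closedBall (0 : Fin 4 → ℚ_[p]) 1 \ {0} := by
  intro x ⟨h1, h2⟩
  rw [mem_D_iff]
  constructor
  · intro i
    refine le_trans (h1 i) ?_
    have := (mW_ge k i).1
    simpa using ppow_le (p := p) (by omega : -(mW k i:ℤ) ≤ 0)
  · rintro rfl
    exact h2 (zero_mem_ball4 _)

lemma exists_norm_level {d : ℝ} (hd : 0 < d) (hd1 : d ≤ 1)
    (hu : ∃ u : ℚ_[p], ‖u‖ = d) : ∃ k : ℕ, d = (p:ℝ) ^ (-(k:ℤ)) := by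
  obtain ⟨u, hu⟩ := hu
  have hune : u ≠ 0 := by rintro rfl; rw [norm_zero] at hu; exact absurd hu.symm (ne_of_gt hd)
  have hval := Padic.norm_eq_zpow_neg_valuation hune
  rw [hu] at hval
  have hm : -u.valuation ≤ 0 := by
    by_contra hc
    push_neg at hc
    have h2 : (p:ℝ)^(0:ℤ) < (p:ℝ)^(-u.valuation) := ppow_lt hc
    rw [zpow_zero, ← hval] at h2
    exact absurd (lt_of_lt_of_le h2 hd1) (lt_irrefl _)
  exact ⟨(u.valuation).toNat, by rw [hval]; congr 1; omega⟩

lemma cover_D {x : Fin 4 → ℚ_[p]} (hx : x ∈ closedBall (0 : Fin 4 → ℚ_[p]) 1 \ {0}) :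
    ∃ k, x ∈ Vset p k ∨ x ∈ Wset p k := by
  obtain ⟨h1, h0⟩ := mem_D_iff.mp hx
  set d01 := max ‖x 0‖ ‖x 1‖ with hd01
  set d23 := max ‖x 2‖ ‖x 3‖ with hd23
  have hd01n : 0 ≤ d01 := le_trans (norm_nonneg _) (le_max_left _ _)
  have hd23n : 0 ≤ d23 := le_trans (norm_nonneg _) (le_max_left _ _)
  have hd011 : d01 ≤ 1 := max_le (h1 0) (h1 1)
  have hd231 : d23 ≤ 1 := max_le (h1 2) (h1 3)
  have hex01 : ∃ u : ℚ_[p], ‖u‖ = d01 := by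
    rcases max_choice ‖x 0‖ ‖x 1‖ with h | h
    · exact ⟨x 0, h.symm⟩
    · exact ⟨x 1, h.symm⟩
  have hex23 : ∃ u : ℚ_[p], ‖u‖ = d23 := by
    rcases max_choice ‖x 2‖ ‖x 3‖ with h | h
    · exact ⟨x 2, h.symm⟩
    · exact ⟨x 3, h.symm⟩
  by_cases hc : d23 ≤ d01
  · -- x lands in some Vset
    have hpos : 0 < d01 := by
      rcases lt_or_eq_of_le hd01n with h | h
      · exact h
      · exfalso
        apply h0
        have hz : ∀ i : Fin 4, x i = 0 := by
          refine forall_fin4 ?_ ?_ ?_ ?_ <;> rw [← norm_le_zero_iff]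
          · exact (le_max_left ‖x 0‖ ‖x 1‖).trans h.symm.le
          · exact (le_max_right ‖x 0‖ ‖x 1‖).trans h.symm.le
          · exact ((le_max_left ‖x 2‖ ‖x 3‖).trans hc).trans h.symm.le
          · exact ((le_max_right ‖x 2‖ ‖x 3‖).trans hc).trans h.symm.le
        exact funext hz
    obtain ⟨k, hk⟩ := exists_norm_level hpos hd011 hex01
    refine ⟨k, Or.inl ⟨?_, ?_⟩⟩
    · refine forall_fin4 ?_ ?_ ?_ ?_
      · exact (le_max_left ‖x 0‖ ‖x 1‖).trans hk.le
      · exact (le_max_right ‖x 0‖ ‖x 1‖).trans hk.le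
      · exact ((le_max_left ‖x 2‖ ‖x 3‖).trans hc).trans hk.le
      · exact ((le_max_right ‖x 2‖ ‖x 3‖).trans hc).trans hk.le
    · intro hmem
      have hA := hmem 0
      have hB := hmem 1
      rw [show mW k 0 = k + 1 from rfl] at hA
      rw [show mW k 1 = k + 1 from rfl] at hB
      have : d01 ≤ (p:ℝ)^(-((k+1:ℕ):ℤ)) := max_le hA hB
      rw [hk] at this
      exact absurd (lt_of_le_of_lt this (ppow_lt (by push_cast; omega))) (lt_irrefl _)
  · -- x lands in some Wset
    push_neg at hc
    have hpos : 0 < d23 := lt_of_le_of_lt hd01n hc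
    obtain ⟨k, hk⟩ := exists_norm_level hpos hd231 hex23
    have hsmall : ∀ i, ‖x i‖ ≤ d01 → ‖x i‖ ≤ (p:ℝ)^(-((k:ℤ)+1)) := by
      intro i hi
      have : ‖x i‖ < (p:ℝ)^(-(k:ℤ)) := lt_of_le_of_lt hi (hk ▸ hc)
      rw [show -(k:ℤ) = (-((k:ℤ)+1)) + 1 by ring] at this
      exact (Padic.norm_le_pow_iff_norm_lt_pow_add_one _ _).mpr this
    refine ⟨k, Or.inr ⟨?_, ?_⟩⟩
    · refine forall_fin4 ?_ ?_ ?_ ?_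
      · show ‖x 0‖ ≤ (p:ℝ)^(-((k+1:ℕ):ℤ))
        push_cast
        exact hsmall 0 (le_max_left _ _)
      · show ‖x 1‖ ≤ (p:ℝ)^(-((k+1:ℕ):ℤ))
        push_cast
        exact hsmall 1 (le_max_right _ _)
      · exact (le_max_left ‖x 2‖ ‖x 3‖).trans hk.le
      · exact (le_max_right ‖x 2‖ ‖x 3‖).trans hk.le
    · intro hmem
      have : d23 ≤ (p:ℝ)^(-((k+1:ℕ):ℤ)) := max_le (hmem 2) (hmem 3)
      rw [hk] at this
      exact absurd (lt_of_le_of_lt this (ppow_lt (by push_cast; omega))) (lt_irrefl _)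

lemma Vset_disj : Pairwise (Function.onFun Disjoint (Vset p)) := by
  have key : ∀ j k : ℕ, j < k → Disjoint (Vset p j) (Vset p k) := by
    intro j k hjk
    rw [Set.disjoint_left]
    intro x hxj hxk
    exact hxj.2 (ball4_anti (fun i => by have := (mW_ge j i).2; omega) hxk.1)
  intro j k hjk
  rcases lt_or_gt_of_ne hjk with h | h
  · exact key j k h
  · exact (key k j h).symm

lemma Wset_disj : Pairwise (Function.onFun Disjoint (Wset p)) := by
  have key : ∀ j k : ℕ, j < k → Disjoint (Wset p j) (Wset p k) := by
    intro j k hjk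
    rw [Set.disjoint_left]
    intro x hxj hxk
    exact hxj.2 (ball4_anti (fun i => by have := (mW_ge k i).1; omega) hxk.1)
  intro j k hjk
  rcases lt_or_gt_of_ne hjk with h | h
  · exact key j k h
  · exact (key k j h).symm

lemma VW_disj (j k : ℕ) : Disjoint (Vset p j) (Wset p k) := by
  rw [Set.disjoint_left]
  intro x hxj hxk
  rcases le_or_gt j k with h | h
  · exact hxj.2 (ball4_anti (fun i => by unfold mW; split <;> omega) hxk.1)
  · exact hxk.2 (ball4_anti (fun i => by omega) hxj.1)

instance : TopologicalSpace.SeparableSpace ℚ_[p] :=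
  ⟨⟨Set.range ((↑) : ℚ → ℚ_[p]), Set.countable_range _, by
    rw [Metric.dense_iff]
    intro x r hr
    obtain ⟨q, hq⟩ := Padic.rat_dense p x hr
    exact ⟨(q : ℚ_[p]), by rwa [Metric.mem_ball, dist_eq_norm, norm_sub_rev], Set.mem_range_self q⟩⟩⟩

instance : SecondCountableTopology ℚ_[p] := UniformSpace.secondCountable_of_separable ℚ_[p]

instance (n : ℕ) : (haarQn p n).IsAddHaarMeasure := by unfold haarQn; infer_instance

instance (n : ℕ) : SigmaFinite (haarQn p n) := by unfold haarQn; infer_instance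

lemma ball4_isClosed (m : Fin 4 → ℕ) : IsClosed (ball4 p m) := by
  have h : ball4 p m = ⋂ i, (fun x : Fin 4 → ℚ_[p] => ‖x i‖) ⁻¹' Set.Iic ((p:ℝ)^(-(m i:ℤ))) := by
    ext x
    simp [ball4, Set.mem_iInter]
  rw [h]
  exact isClosed_iInter fun i => IsClosed.preimage ((continuous_apply i).norm) isClosed_Iic

lemma ball4_mble (m : Fin 4 → ℕ) : MeasurableSet (ball4 p m) := (ball4_isClosed m).measurableSet

lemma ball4_zero_eq : ball4 p (fun _ => 0) = closedBall (0 : Fin 4 → ℚ_[p]) 1 := by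
  ext x
  rw [Metric.mem_closedBall, dist_pi_le_iff zero_le_one]
  constructor
  · intro h i
    have := h i
    simpa [dist_eq_norm] using this
  · intro h i
    have := h i
    simpa [dist_eq_norm] using this

lemma haarQn_ball_one : haarQn p 4 (ball4 p (fun _ => 0)) = 1 := by
  rw [ball4_zero_eq]
  exact Measure.addHaarMeasure_self

lemma nat_eq_of_dvd_sub {j j' : ℕ} (hj : j < p) (hj' : j' < p) (h : (p:ℤ) ∣ (j:ℤ) - (j':ℤ)) :
    j = j' := by
  haveI : NeZero p := ⟨(Fact.out : p.Prime).ne_zero⟩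
  have hz : ((j:ℤ) - (j':ℤ) : ℤ) = ((j:ℤ) - (j':ℤ)) := rfl
  have : (((j:ℤ) - (j':ℤ) : ℤ) : ZMod p) = 0 := (ZMod.intCast_zmod_eq_zero_iff_dvd _ p).mpr h
  have hjj' : ((j:ZMod p)) = (j':ZMod p) := by
    push_cast at this
    linear_combination this
  have := congrArg ZMod.val hjj'
  rwa [ZMod.val_natCast_of_lt hj, ZMod.val_natCast_of_lt hj'] at this

lemma exists_residue (z : ℚ_[p]) (hz : ‖z‖ ≤ 1) :
    ∃ j : ℕ, j < p ∧ ‖z - (j:ℚ_[p])‖ ≤ (p:ℝ)^(-1:ℤ) := by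
  haveI : NeZero p := ⟨(Fact.out : p.Prime).ne_zero⟩
  set Z : ℤ_[p] := ⟨z, hz⟩ with hZ
  refine ⟨(PadicInt.toZMod Z).val, ZMod.val_lt _, ?_⟩
  have hmem := PadicInt.toZMod_spec Z
  have hlt : ‖Z - (ZMod.cast (PadicInt.toZMod Z) : ℤ_[p])‖ < 1 := by
    rwa [← PadicInt.mem_nonunits, ← IsLocalRing.mem_maximalIdeal]
  have hcast : (ZMod.cast (PadicInt.toZMod Z) : ℤ_[p]) = (((PadicInt.toZMod Z).val : ℕ) : ℤ_[p]) := by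
    rw [ZMod.natCast_val]
  have hq : ‖z - (((PadicInt.toZMod Z).val : ℕ) : ℚ_[p])‖ < 1 := by
    have := hlt
    rw [hcast] at this
    rw [← PadicInt.padic_norm_e_of_padicInt] at this
    push_cast at this
    convert this using 2
  have : ‖z - (((PadicInt.toZMod Z).val : ℕ) : ℚ_[p])‖ ≤ (p:ℝ)^(-1:ℤ) := by
    rw [show (-1:ℤ) = 0 + -1 by ring]
    rw [Padic.norm_le_pow_iff_norm_lt_pow_add_one]
    simpa using hq
  exact this

lemma haar_step (m : Fin 4 → ℕ) (i₀ : Fin 4) :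
    haarQn p 4 (ball4 p m) = p * haarQn p 4 (ball4 p (Function.update m i₀ (m i₀ + 1))) := by
  classical
  set m' := Function.update m i₀ (m i₀ + 1) with hm'
  set π : ℚ_[p] := (p:ℚ_[p])^(m i₀) with hπ
  have hπn : ‖π‖ = (p:ℝ)^(-(m i₀:ℤ)) := norm_p_pow_padic _
  have hπ0 : π ≠ 0 := pow_ne_zero _ pQp_ne_zero
  set c : ℕ → (Fin 4 → ℚ_[p]) := fun j i => if i = i₀ then -(π * j) else 0 with hc
  have hcval : ∀ j : ℕ, c j i₀ = -(π * (j:ℚ_[p])) := by intro j; simp [hc]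
  have hcval' : ∀ (j : ℕ) i, i ≠ i₀ → c j i = 0 := by intro j i hi; simp [hc, hi]
  have hm'val : m' i₀ = m i₀ + 1 := by rw [hm', Function.update_self]
  have hm'val' : ∀ i, i ≠ i₀ → m' i = m i := by
    intro i hi
    rw [hm', Function.update_of_ne hi]
  have hmem : ∀ (j : ℕ) (x : Fin 4 → ℚ_[p]),
      x ∈ (fun y => c j + y) ⁻¹' ball4 p m' ↔
      (‖x i₀ - π * j‖ ≤ (p:ℝ)^(-((m i₀:ℤ)+1)) ∧ ∀ i, i ≠ i₀ → ‖x i‖ ≤ (p:ℝ)^(-(m i:ℤ))) := by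
    intro j x
    rw [Set.mem_preimage]
    constructor
    · intro h
      constructor
      · have hh := h i₀
        rw [Pi.add_apply, hcval j, hm'val, neg_add_eq_sub,
          show (-((m i₀ + 1 : ℕ):ℤ)) = -((m i₀:ℤ)+1) by push_cast; ring] at hh
        exact hh
      · intro i hi
        have hh := h i
        rwa [Pi.add_apply, hcval' j i hi, hm'val' i hi, zero_add] at hh
    · intro ⟨h1, h2⟩
      have key : ∀ i, ‖(c j + x) i‖ ≤ (p:ℝ)^(-(m' i:ℤ)) := ?_
      · exact key
      intro i
      by_cases hi : i = i₀
      · subst hi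
        rw [Pi.add_apply, hcval j, hm'val, neg_add_eq_sub,
          show (-((m i + 1 : ℕ):ℤ)) = -((m i:ℤ)+1) by push_cast; ring]
        exact h1
      · rw [Pi.add_apply, hcval' j i hi, hm'val' i hi, zero_add]
        exact h2 i hi
  have hcover : ball4 p m = ⋃ j ∈ Finset.range p, (fun y => c j + y) ⁻¹' ball4 p m' := by
    ext x
    simp only [Set.mem_iUnion, Finset.mem_range, exists_prop]
    constructor
    · intro hx
      obtain ⟨j, hjp, hjb⟩ := exists_residue (x i₀ / π) (by
        rw [norm_div, hπn, div_le_one (ppow_pos _)]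
        exact hx i₀)
      refine ⟨j, hjp, (hmem j x).mpr ⟨?_, fun i _ => hx i⟩⟩
      have hfac : x i₀ - π * j = π * (x i₀ / π - j) := by field_simp
      rw [hfac, norm_mul, hπn]
      calc (p:ℝ)^(-(m i₀:ℤ)) * ‖x i₀ / π - (j:ℚ_[p])‖ ≤ (p:ℝ)^(-(m i₀:ℤ)) * (p:ℝ)^(-1:ℤ) :=
            mul_le_mul_of_nonneg_left hjb (le_of_lt (ppow_pos _))
        _ = (p:ℝ)^(-((m i₀:ℤ)+1)) := by
            rw [← zpow_add₀ (ne_of_gt (lt_trans one_pos pReal_one_lt))]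
            ring_nf
    · intro ⟨j, hjp, hj⟩
      obtain ⟨h1, h2⟩ := (hmem j x).mp hj
      intro i
      by_cases hi : i = i₀
      · subst hi
        have hxw : x i = (x i - π * j) + π * j := by ring
        rw [hxw]
        refine le_trans (Padic.nonarchimedean _ _) (max_le ?_ ?_)
        · exact le_trans h1 (le_of_lt (ppow_lt (by omega)))
        · rw [norm_mul, hπn]
          have hj1 : ‖((j:ℕ):ℚ_[p])‖ ≤ 1 := by
            have := Padic.norm_int_le_one (p := p) (j:ℤ)
            push_cast at this
            exact this
          calc (p:ℝ)^(-(m i:ℤ)) * ‖((j:ℕ):ℚ_[p])‖ ≤ (p:ℝ)^(-(m i:ℤ)) * 1 :=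
                mul_le_mul_of_nonneg_left hj1 (le_of_lt (ppow_pos _))
            _ = (p:ℝ)^(-(m i:ℤ)) := mul_one _
      · exact h2 i hi
  have hdisj : Set.Pairwise ↑(Finset.range p)
      (Function.onFun Disjoint (fun j => (fun y => c j + y) ⁻¹' ball4 p m')) := by
    intro j hj j' hj' hne
    rw [Function.onFun, Set.disjoint_left]
    intro x hx hx'
    obtain ⟨h1, _⟩ := (hmem j x).mp hx
    obtain ⟨h1', _⟩ := (hmem j' x).mp hx'
    apply hne
    rw [Finset.mem_coe, Finset.mem_range] at hj hj'
    refine nat_eq_of_dvd_sub hj hj' ?_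
    have hsub : ‖π * ((j':ℚ_[p]) - (j:ℚ_[p]))‖ ≤ (p:ℝ)^(-((m i₀:ℤ)+1)) := by
      have : π * ((j':ℚ_[p]) - (j:ℚ_[p])) = (x i₀ - π * j) - (x i₀ - π * j') := by ring
      rw [this]
      exact le_trans (padic_sub_le_max _ _) (max_le h1 h1')
    rw [norm_mul, hπn] at hsub
    have hjj : ‖(j':ℚ_[p]) - (j:ℚ_[p])‖ ≤ (p:ℝ)^(-1:ℤ) := by
      have hpos := ppow_pos (p := p) (-(m i₀:ℤ))
      rw [show -((m i₀:ℤ)+1) = -(m i₀:ℤ) + (-1:ℤ) by ring,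
        zpow_add₀ (ne_of_gt (lt_trans one_pos pReal_one_lt))] at hsub
      exact le_of_mul_le_mul_left hsub hpos
    have hlt1 : ‖(((j':ℤ) - (j:ℤ) : ℤ) : ℚ_[p])‖ < 1 := by
      push_cast
      calc ‖(j':ℚ_[p]) - (j:ℚ_[p])‖ ≤ (p:ℝ)^(-1:ℤ) := hjj
        _ < (p:ℝ)^(0:ℤ) := ppow_lt (by omega)
        _ = 1 := zpow_zero _
    have := Padic.norm_intCast_lt_one_iff.mp hlt1
    exact (dvd_sub_comm.mp this)
  rw [hcover, measure_biUnion_finset hdisj (fun j _ => (ball4_mble m').preimage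
    (measurable_const_add (c j)))]
  have heach : ∀ j ∈ Finset.range p,
      haarQn p 4 ((fun y => c j + y) ⁻¹' ball4 p m') = haarQn p 4 (ball4 p m') := by
    intro j _
    exact measure_preimage_add (haarQn p 4) (c j) (ball4 p m')
  rw [Finset.sum_congr rfl heach, Finset.sum_const, Finset.card_range, nsmul_eq_mul]

lemma ball4_meas (m : Fin 4 → ℕ) :
    haarQn p 4 (ball4 p m) = ((p:ℝ≥0∞))⁻¹ ^ (∑ i, m i) := by
  have hp0 : (p:ℝ≥0∞) ≠ 0 := Nat.cast_ne_zero.mpr (Fact.out : p.Prime).ne_zero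
  have hptop : (p:ℝ≥0∞) ≠ ⊤ := ENNReal.natCast_ne_top p
  suffices h : ∀ (n : ℕ) (m : Fin 4 → ℕ), ∑ i, m i = n →
      haarQn p 4 (ball4 p m) = ((p:ℝ≥0∞))⁻¹ ^ n from h _ m rfl
  intro n
  induction n with
  | zero =>
    intro m hm
    have hm0 : m = fun _ => 0 := by
      funext i
      exact Finset.sum_eq_zero_iff.mp hm i (Finset.mem_univ i)
    rw [hm0, pow_zero]
    exact haarQn_ball_one
  | succ n ih =>
    intro m hm
    have hex : ∃ i₀, 0 < m i₀ := by
      by_contra hc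
      push_neg at hc
      have : ∑ i, m i = 0 := Finset.sum_eq_zero fun i _ => Nat.le_zero.mp (hc i)
      omega
    obtain ⟨i₀, hi₀⟩ := hex
    set m' := Function.update m i₀ (m i₀ - 1) with hm'
    have hm'i₀ : m' i₀ = m i₀ - 1 := by rw [hm', Function.update_self]
    have hm'o : ∀ i, i ≠ i₀ → m' i = m i := fun i hi => by
      rw [hm', Function.update_of_ne hi]
    have hupd : Function.update m' i₀ (m' i₀ + 1) = m := by
      funext i
      by_cases hi : i = i₀
      · subst hi
        rw [Function.update_self, hm'i₀]
        omega
      · rw [Function.update_of_ne hi, hm'o i hi]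
    have hsum' : ∑ i, m' i = n := by
      have h1 : ∑ i, m' i = (m i₀ - 1) + ∑ i ∈ Finset.univ \ {i₀}, m i := by
        rw [hm', Finset.sum_update_of_mem (Finset.mem_univ i₀)]
      have h2 : ∑ i, m i = m i₀ + ∑ i ∈ Finset.univ \ {i₀}, m i := by
        rw [Finset.sum_eq_sum_sdiff_singleton_add (Finset.mem_univ i₀) m]
        ring
      omega
    have hstep := haar_step (p := p) m' i₀
    rw [hupd, ih m' hsum'] at hstep
    calc haarQn p 4 (ball4 p m)
        = ((p:ℝ≥0∞)⁻¹ * (p:ℝ≥0∞)) * haarQn p 4 (ball4 p m) := by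
          rw [ENNReal.inv_mul_cancel hp0 hptop, one_mul]
      _ = (p:ℝ≥0∞)⁻¹ * ((p:ℝ≥0∞) * haarQn p 4 (ball4 p m)) := by rw [mul_assoc]
      _ = (p:ℝ≥0∞)⁻¹ * (p:ℝ≥0∞)⁻¹ ^ n := by rw [← hstep]
      _ = (p:ℝ≥0∞)⁻¹ ^ (n+1) := by rw [pow_succ, mul_comm]

lemma pinv_ne_top : ((p:ℝ≥0∞))⁻¹ ≠ ⊤ :=
  ENNReal.inv_ne_top.mpr (Nat.cast_ne_zero.mpr (Fact.out : p.Prime).ne_zero)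

lemma sum_mV (k : ℕ) : (∑ _i : Fin 4, k) = 4 * k := by
  rw [Finset.sum_const, Finset.card_univ, Fintype.card_fin]
  ring

lemma sum_mS (k : ℕ) : (∑ _i : Fin 4, (k+1)) = 4 * k + 4 := by
  rw [Finset.sum_const, Finset.card_univ, Fintype.card_fin]
  ring

lemma sum_mW (k : ℕ) : (∑ i, mW k i) = 4 * k + 2 := by
  rw [Fin.sum_univ_four]
  rw [show mW k 0 = k+1 from rfl, show mW k 1 = k+1 from rfl,
    show mW k 2 = k from rfl, show mW k 3 = k from rfl]
  ring

lemma Vset_meas (k : ℕ) :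
    haarQn p 4 (Vset p k) = ((p:ℝ≥0∞))⁻¹ ^ (4*k) - ((p:ℝ≥0∞))⁻¹ ^ (4*k+2) := by
  unfold Vset
  rw [measure_diff (ball4_anti (fun i => (mW_ge k i).1)) (ball4_mble _).nullMeasurableSet
    (by rw [ball4_meas]; exact ENNReal.pow_ne_top pinv_ne_top),
    ball4_meas, ball4_meas, sum_mV, sum_mW]

lemma Wset_meas (k : ℕ) :
    haarQn p 4 (Wset p k) = ((p:ℝ≥0∞))⁻¹ ^ (4*k+2) - ((p:ℝ≥0∞))⁻¹ ^ (4*k+4) := by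
  unfold Wset
  rw [measure_diff (ball4_anti (fun i => by have := (mW_ge k i).2; omega))
    (ball4_mble _).nullMeasurableSet
    (by rw [ball4_meas]; exact ENNReal.pow_ne_top pinv_ne_top),
    ball4_meas, ball4_meas, sum_mW, sum_mS]

noncomputable def LL (p : ℕ) : ℂ := (Real.log p : ℂ)

lemma cR_pos : (0:ℝ) < (p:ℝ)⁻¹ := inv_pos.mpr (lt_trans one_pos pReal_one_lt)

lemma ofReal_cRpow (n : ℕ) : (((p:ℝ)⁻¹ ^ n : ℝ) : ℂ) = Complex.exp (-(n * LL p)) := by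
  have hb : (0:ℝ) < (p:ℝ)⁻¹ ^ n := pow_pos cR_pos n
  have hlog : Real.log ((p:ℝ)⁻¹ ^ n) = -(n * Real.log p) := by
    rw [Real.log_pow, Real.log_inv]
    ring
  rw [← Real.exp_log hb, hlog, Complex.ofReal_exp]
  congr 1
  unfold LL
  push_cast
  ring

lemma cpow_cRpow (n : ℕ) (z : ℂ) :
    ((((p:ℝ)⁻¹ ^ n : ℝ) : ℂ)) ^ z = Complex.exp (-(n * LL p) * z) := by
  have hb : (0:ℝ) < (p:ℝ)⁻¹ ^ n := pow_pos cR_pos n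
  have hb0 : (((p:ℝ)⁻¹ ^ n : ℝ) : ℂ) ≠ 0 := by
    simpa using ne_of_gt hb
  rw [Complex.cpow_def_of_ne_zero hb0]
  congr 1
  have him : (-((n:ℂ) * LL p)).im = 0 := by
    unfold LL
    rw [Complex.neg_im, Complex.mul_im, Complex.natCast_im, Complex.natCast_re,
      Complex.ofReal_im, Complex.ofReal_re]
    ring
  rw [show (((p:ℝ)⁻¹ ^ n : ℝ) : ℂ) = Complex.exp (-(n * LL p)) from ofReal_cRpow n,
    Complex.log_exp (by rw [him]; exact neg_lt_zero.mpr Real.pi_pos)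
      (by rw [him]; exact le_of_lt Real.pi_pos)]

lemma zpow_to_pow (n : ℕ) : (p:ℝ) ^ (-(n:ℤ)) = (p:ℝ)⁻¹ ^ n := by
  rw [zpow_neg, zpow_natCast, inv_pow]

lemma cpow_natCast_exp : (p:ℂ) ^ (-(2:ℂ)) = Complex.exp (-(2 * LL p)) := by
  have hp0 : (p:ℂ) ≠ 0 := by
    exact_mod_cast Nat.cast_ne_zero.mpr (Fact.out : p.Prime).ne_zero
  rw [Complex.cpow_def_of_ne_zero hp0]
  congr 1
  rw [show ((p:ℕ):ℂ) = (((p:ℕ):ℝ):ℂ) by push_cast; ring,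
    ← Complex.ofReal_log (le_of_lt (lt_trans one_pos pReal_one_lt))]
  unfold LL
  ring

lemma cpow_neg_alpha (α : ℂ) : (p:ℂ) ^ (-α) = Complex.exp (-(LL p * α)) := by
  have hp0 : (p:ℂ) ≠ 0 := by
    exact_mod_cast Nat.cast_ne_zero.mpr (Fact.out : p.Prime).ne_zero
  rw [Complex.cpow_def_of_ne_zero hp0]
  congr 1
  rw [show ((p:ℕ):ℂ) = (((p:ℕ):ℝ):ℂ) by push_cast; ring,
    ← Complex.ofReal_log (le_of_lt (lt_trans one_pos pReal_one_lt))]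
  unfold LL
  ring

lemma norm_exp_lt_one {z : ℂ} (hz : z.re < 0) : ‖Complex.exp z‖ < 1 := by
  rw [Complex.norm_exp]
  exact Real.exp_lt_one_iff.mpr hz


lemma pinv_pow_le {n m : ℕ} (h : n ≤ m) : ((p:ℝ≥0∞))⁻¹ ^ m ≤ ((p:ℝ≥0∞))⁻¹ ^ n := by
  have h1 : ((p:ℝ≥0∞))⁻¹ ≤ 1 := by
    rw [ENNReal.inv_le_one]
    exact_mod_cast Nat.one_le_cast.mpr (Fact.out : p.Prime).one_lt.le
  exact pow_le_pow_of_le_one zero_le h1 h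

lemma Vmeas_toReal (k : ℕ) :
    (haarQn p 4 (Vset p k)).toReal = (p:ℝ)⁻¹ ^ (4*k) - (p:ℝ)⁻¹ ^ (4*k+2) := by
  rw [Vset_meas k, ENNReal.toReal_sub_of_le (pinv_pow_le (by omega))
    (ENNReal.pow_ne_top pinv_ne_top), ENNReal.toReal_pow, ENNReal.toReal_pow,
    ENNReal.toReal_inv, ENNReal.toReal_natCast]

lemma Wmeas_toReal (k : ℕ) :
    (haarQn p 4 (Wset p k)).toReal = (p:ℝ)⁻¹ ^ (4*k+2) - (p:ℝ)⁻¹ ^ (4*k+4) := by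
  rw [Wset_meas k, ENNReal.toReal_sub_of_le (pinv_pow_le (by omega))
    (ENNReal.pow_ne_top pinv_ne_top), ENNReal.toReal_pow, ENNReal.toReal_pow,
    ENNReal.toReal_inv, ENNReal.toReal_natCast]

lemma intV (a : ℤ) (ha : legendreSym p a = -1) (α : ℂ) (k : ℕ) :
    ∫ x in Vset p k, ((‖Qf p a x‖ : ℂ) ^ (α - 2)) ∂(haarQn p 4)
      = (1 - Complex.exp (-(2 * LL p))) * (Complex.exp (-(2 * (LL p * α)))) ^ k := by
  have hmV : MeasurableSet (Vset p k) := (ball4_mble _).diff (ball4_mble _)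
  have heq : Set.EqOn (fun x => ((‖Qf p a x‖ : ℂ) ^ (α - 2)))
      (fun _ => (((p:ℝ)⁻¹ ^ (2*k) : ℝ) : ℂ) ^ (α - 2)) (Vset p k) := by
    intro x hx
    simp only
    rw [norm_Qf_V ha hx, show -(2*(k:ℤ)) = -((2*k:ℕ):ℤ) by push_cast; ring, zpow_to_pow]
  rw [setIntegral_congr_fun hmV heq, setIntegral_const, measureReal_def, Vmeas_toReal k, cpow_cRpow]
  rw [Complex.real_smul, Complex.ofReal_sub, ofReal_cRpow, ofReal_cRpow]
  have h1 : Complex.exp (-(((4*k+2 : ℕ)) * LL p)) =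
      Complex.exp (-(((4*k : ℕ)) * LL p)) * Complex.exp (-(2 * LL p)) := by
    rw [← Complex.exp_add]
    congr 1
    push_cast
    ring
  have h2 : Complex.exp (-(((4*k : ℕ)) * LL p)) * Complex.exp (-(((2*k : ℕ)) * LL p) * (α - 2)) =
      (Complex.exp (-(2 * (LL p * α)))) ^ k := by
    rw [← Complex.exp_nat_mul, ← Complex.exp_add]
    congr 1
    push_cast
    ring
  calc (Complex.exp (-(((4*k:ℕ)) * LL p)) - Complex.exp (-(((4*k+2:ℕ)) * LL p))) *
        Complex.exp (-(((2*k:ℕ)) * LL p) * (α - 2))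
      = (1 - Complex.exp (-(2 * LL p))) *
        (Complex.exp (-(((4*k:ℕ)) * LL p)) * Complex.exp (-(((2*k:ℕ)) * LL p) * (α - 2))) := by
        rw [h1]; ring
    _ = (1 - Complex.exp (-(2 * LL p))) * (Complex.exp (-(2 * (LL p * α)))) ^ k := by rw [h2]

lemma intW (a : ℤ) (ha : legendreSym p a = -1) (α : ℂ) (k : ℕ) :
    ∫ x in Wset p k, ((‖Qf p a x‖ : ℂ) ^ (α - 2)) ∂(haarQn p 4)
      = ((1 - Complex.exp (-(2 * LL p))) * Complex.exp (-(LL p * α))) *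
        (Complex.exp (-(2 * (LL p * α)))) ^ k := by
  have hmW : MeasurableSet (Wset p k) := (ball4_mble _).diff (ball4_mble _)
  have heq : Set.EqOn (fun x => ((‖Qf p a x‖ : ℂ) ^ (α - 2)))
      (fun _ => (((p:ℝ)⁻¹ ^ (2*k+1) : ℝ) : ℂ) ^ (α - 2)) (Wset p k) := by
    intro x hx
    simp only
    rw [norm_Qf_W ha hx, show -(2*(k:ℤ)+1) = -((2*k+1:ℕ):ℤ) by push_cast; ring, zpow_to_pow]
  rw [setIntegral_congr_fun hmW heq, setIntegral_const, measureReal_def, Wmeas_toReal k, cpow_cRpow]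
  rw [Complex.real_smul, Complex.ofReal_sub, ofReal_cRpow, ofReal_cRpow]
  have h1 : Complex.exp (-(((4*k+4 : ℕ)) * LL p)) =
      Complex.exp (-(((4*k+2 : ℕ)) * LL p)) * Complex.exp (-(2 * LL p)) := by
    rw [← Complex.exp_add]
    congr 1
    push_cast
    ring
  have h2 : Complex.exp (-(((4*k+2 : ℕ)) * LL p)) *
        Complex.exp (-(((2*k+1 : ℕ)) * LL p) * (α - 2)) =
      Complex.exp (-(LL p * α)) * (Complex.exp (-(2 * (LL p * α)))) ^ k := by
    rw [← Complex.exp_nat_mul, ← Complex.exp_add, ← Complex.exp_add]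
    congr 1
    push_cast
    ring
  calc (Complex.exp (-(((4*k+2:ℕ)) * LL p)) - Complex.exp (-(((4*k+4:ℕ)) * LL p))) *
        Complex.exp (-(((2*k+1:ℕ)) * LL p) * (α - 2))
      = (1 - Complex.exp (-(2 * LL p))) *
        (Complex.exp (-(((4*k+2:ℕ)) * LL p)) * Complex.exp (-(((2*k+1:ℕ)) * LL p) * (α - 2))) := by
        rw [h1]; ring
    _ = ((1 - Complex.exp (-(2 * LL p))) * Complex.exp (-(LL p * α))) *
        (Complex.exp (-(2 * (LL p * α)))) ^ k := by rw [h2]; ring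



end ZpAuxProof

/-- For `Re α > 2`, `Z(α) = ∫_{ℤ_p⁴∖{0}} |f(x)|_p^{α-2} d⁴x` converges and equals
`(1 - p^{-2})/(1 - p^{-α})`. -/
theorem integral_over_Zp4 (p : ℕ) [Fact p.Prime] (hp : p ≠ 2)
    (a : ℤ) (ha : legendreSym p a = -1) (α : ℂ) (hα : 2 < α.re) :
    IntegrableOn (fun x : Fin 4 → ℚ_[p] => ((‖Qf p a x‖ : ℂ) ^ (α - 2)))
        (Metric.closedBall 0 1 \ {0}) (haarQn p 4) ∧
      ∫ x in Metric.closedBall (0 : Fin 4 → ℚ_[p]) 1 \ {0},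
          ((‖Qf p a x‖ : ℂ) ^ (α - 2)) ∂haarQn p 4 =
        (1 - (p : ℂ) ^ (-(2 : ℂ))) / (1 - (p : ℂ) ^ (-α)) := by
  set μ := haarQn p 4 with hμ
  set f : (Fin 4 → ℚ_[p]) → ℂ := fun x => ((‖Qf p a x‖ : ℂ) ^ (α - 2)) with hfdef
  set D : Set (Fin 4 → ℚ_[p]) := Metric.closedBall 0 1 \ {0} with hDdef
  have hw0 : α - 2 ≠ 0 := by
    intro h
    have := congrArg Complex.re h
    simp only [Complex.sub_re, Complex.zero_re] at this
    norm_num at this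
    linarith
  have hwre : 0 < (α - 2).re := by
    rw [Complex.sub_re]
    norm_num
    linarith
  -- continuity / measurability
  have hQcont : Continuous fun x : Fin 4 → ℚ_[p] => ‖Qf p a x‖ := by
    apply Continuous.norm
    unfold Qf
    exact ((((continuous_apply 0).pow 2).sub
      (continuous_const.mul ((continuous_apply 1).pow 2))).sub
      (continuous_const.mul ((continuous_apply 2).pow 2))).add
      (by fun_prop)
  have hfm : Measurable f := by
    have heq : f = fun x =>
        if ‖Qf p a x‖ = 0 then 0
        else Complex.exp (((Real.log ‖Qf p a x‖ : ℝ) : ℂ) * (α - 2)) := by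
      funext x
      by_cases h : ‖Qf p a x‖ = 0
      · rw [hfdef]
        simp only [h, if_pos]
        rw [Complex.ofReal_zero]
        exact zero_cpow hw0
      · rw [hfdef]
        simp only [if_neg h]
        have h0 : ((‖Qf p a x‖ : ℝ) : ℂ) ≠ 0 := by exact_mod_cast h
        rw [Complex.cpow_def_of_ne_zero h0]
        congr 1
        rw [Complex.ofReal_log (norm_nonneg _)]
    rw [heq]
    refine Measurable.ite (hQcont.measurable (measurableSet_singleton 0)) measurable_const ?_
    exact Complex.continuous_exp.measurable.comp
      ((Complex.measurable_ofReal.comp (Real.measurable_log.comp hQcont.measurable)).mul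
        measurable_const)
  -- measurable set, finite measure
  have hDm : MeasurableSet D := measurableSet_closedBall.diff (measurableSet_singleton _)
  have hDfin : μ D ≠ ⊤ := by
    refine ne_of_lt (lt_of_le_of_lt (measure_mono Set.diff_subset) ?_)
    exact (isCompact_closedBall (0 : Fin 4 → ℚ_[p]) 1).measure_lt_top
  -- bound
  have hQ1 : ∀ x : Fin 4 → ℚ_[p], (∀ i, ‖x i‖ ≤ 1) → ‖Qf p a x‖ ≤ 1 := by
    intro x hx
    have hp1 : ‖(p:ℚ_[p])‖ ≤ 1 := by
      rw [Padic.norm_p]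
      exact inv_le_one_of_one_le₀ (le_of_lt pReal_one_lt)
    have hsq : ∀ i, ‖x i ^ 2‖ ≤ 1 := fun i => by
      rw [norm_pow]; exact pow_le_one₀ (norm_nonneg _) (hx i)
    have t1 : ‖x 0 ^ 2 - (a:ℚ_[p]) * x 1 ^ 2‖ ≤ 1 := by
      refine le_trans (padic_sub_le_max _ _) (max_le (hsq 0) ?_)
      rw [norm_mul, norm_a_eq_one ha, one_mul]
      exact hsq 1
    have t2 : ‖x 0 ^ 2 - (a:ℚ_[p]) * x 1 ^ 2 - (p:ℚ_[p]) * x 2 ^ 2‖ ≤ 1 := by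
      refine le_trans (padic_sub_le_max _ _) (max_le t1 ?_)
      rw [norm_mul]
      exact mul_le_one₀ hp1 (norm_nonneg _) (hsq 2)
    unfold Qf
    refine le_trans (Padic.nonarchimedean _ _) (max_le t2 ?_)
    rw [norm_mul, norm_mul, norm_a_eq_one ha, one_mul]
    exact mul_le_one₀ hp1 (norm_nonneg _) (hsq 3)
  have hbound : ∀ x ∈ D, ‖f x‖ ≤ 1 := by
    intro x hx
    have hx1 : ∀ i, ‖x i‖ ≤ 1 := by
      intro i
      have hmem := hx.1
      rw [Metric.mem_closedBall, dist_pi_le_iff zero_le_one] at hmem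
      simpa [dist_eq_norm] using hmem i
    by_cases h : ‖Qf p a x‖ = 0
    · rw [hfdef]
      simp only [h]
      rw [Complex.ofReal_zero, zero_cpow hw0, norm_zero]
      exact zero_le_one
    · have hpos : 0 < ‖Qf p a x‖ := lt_of_le_of_ne (norm_nonneg _) (Ne.symm h)
      rw [hfdef]
      simp only
      rw [Complex.norm_cpow_eq_rpow_re_of_pos hpos]
      exact Real.rpow_le_one (norm_nonneg _) (hQ1 x hx1) (le_of_lt hwre)
  have hInt : IntegrableOn f D μ :=
    Measure.integrableOn_of_bounded hDfin hfm.aestronglyMeasurable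
      (ae_restrict_of_forall_mem hDm hbound)
  refine ⟨hInt, ?_⟩
  -- decomposition
  have hDeq : D = (⋃ k, Vset p k) ∪ ⋃ k, Wset p k := by
    apply Set.Subset.antisymm
    · intro x hx
      obtain ⟨k, hk | hk⟩ := cover_D hx
      · exact Or.inl (Set.mem_iUnion.mpr ⟨k, hk⟩)
      · exact Or.inr (Set.mem_iUnion.mpr ⟨k, hk⟩)
    · intro x hx
      rcases hx with hx | hx <;> obtain ⟨k, hk⟩ := Set.mem_iUnion.mp hx
      · exact Vset_subset_D k hk
      · exact Wset_subset_D k hk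
  have hmV : ∀ k, MeasurableSet (Vset p k) := fun k => (ball4_mble _).diff (ball4_mble _)
  have hmW : ∀ k, MeasurableSet (Wset p k) := fun k => (ball4_mble _).diff (ball4_mble _)
  have hIntV : IntegrableOn f (⋃ k, Vset p k) μ :=
    hInt.mono_set (hDeq ▸ Set.subset_union_left)
  have hIntW : IntegrableOn f (⋃ k, Wset p k) μ :=
    hInt.mono_set (hDeq ▸ Set.subset_union_right)
  have hdisjUW : Disjoint (⋃ k, Vset p k) (⋃ k, Wset p k) :=
    Set.disjoint_iUnion_left.mpr fun i => Set.disjoint_iUnion_right.mpr fun j => VW_disj i j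
  rw [hDeq, setIntegral_union hdisjUW (MeasurableSet.iUnion hmW) hIntV hIntW,
    integral_iUnion hmV Vset_disj hIntV, integral_iUnion hmW Wset_disj hIntW]
  -- sum the two geometric series
  set E2 : ℂ := Complex.exp (-(2 * LL p)) with hE2
  set w : ℂ := Complex.exp (-(LL p * α)) with hwdef
  set r : ℂ := Complex.exp (-(2 * (LL p * α))) with hrdef
  have hlogp : 0 < Real.log p := Real.log_pos pReal_one_lt
  have hwre2 : (-(LL p * α)).re = -(Real.log p * α.re) := by
    unfold LL
    rw [Complex.neg_re, Complex.mul_re, Complex.ofReal_re, Complex.ofReal_im]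
    ring
  have hw_lt : ‖w‖ < 1 := by
    apply norm_exp_lt_one
    rw [hwre2]
    nlinarith
  have hr_lt : ‖r‖ < 1 := by
    apply norm_exp_lt_one
    rw [show (-(2 * (LL p * α))).re = 2 * (-(LL p * α)).re by
      rw [Complex.neg_re, Complex.neg_re, Complex.mul_re]
      norm_num
      ring]
    rw [hwre2]
    nlinarith
  have hVsum : ∑' k, ∫ x in Vset p k, f x ∂μ = (1 - E2) * (1 - r)⁻¹ := by
    have : ∀ k, ∫ x in Vset p k, f x ∂μ = (1 - E2) * r ^ k := fun k => intV a ha α k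
    rw [tsum_congr this, tsum_mul_left, tsum_geometric_of_norm_lt_one hr_lt]
  have hWsum : ∑' k, ∫ x in Wset p k, f x ∂μ = ((1 - E2) * w) * (1 - r)⁻¹ := by
    have : ∀ k, ∫ x in Wset p k, f x ∂μ = ((1 - E2) * w) * r ^ k := fun k => intW a ha α k
    rw [tsum_congr this, tsum_mul_left, tsum_geometric_of_norm_lt_one hr_lt]
  rw [hVsum, hWsum, cpow_natCast_exp, cpow_neg_alpha α, ← hE2, ← hwdef]
  -- final algebra
  have hr_eq : r = w ^ 2 := by
    rw [hrdef, hwdef, sq, ← Complex.exp_add]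
    congr 1
    ring
  have hne1 : 1 - w ≠ 0 := by
    intro h
    have : w = 1 := by linear_combination -h
    rw [this] at hw_lt
    simp at hw_lt
  have hne2 : 1 + w ≠ 0 := by
    intro h
    have : w = -1 := by linear_combination h
    rw [this] at hw_lt
    simp at hw_lt
  have hner : 1 - r ≠ 0 := by
    rw [hr_eq, show (1:ℂ) - w^2 = (1-w)*(1+w) by ring]
    exact mul_ne_zero hne1 hne2
  rw [hr_eq]
  have hfac : (1:ℂ) - w^2 = (1-w)*(1+w) := by ring
  field_simp [hfac]
  ring
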